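/- Let Ω be a compact Hausdorff space and X a Banach space. Suppose Λ ∈ C(Ω, X)*_1 is a w*-w point of continuity that can be written as Λ = ∑_{i=1}^∞ α_i (δ_{ω_i} ⊗ x_i*) with α_i ∈ (0,1], ∑ α_i = 1, ‖x_i*‖ = 1, and the ω_i distinct. Then each ω_i is an isolated point of Ω. -/

import Mathlib

open NormedSpace Filter Topology

variable {Ω : Type*} [TopologicalSpace Ω] [CompactSpace Ω]
variable {X : Type*} [NormedAddCommGroup X] [NormedSpace ℝ X]

/-- The functional `δ_ω ⊗ x* : f ↦ x*(f ω)` on `C(Ω, X)`. -/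
noncomputable def deltaTensor (ω : Ω) (x : StrongDual ℝ X) : StrongDual ℝ C(Ω, X) :=
  LinearMap.mkContinuous
    { toFun := fun f : C(Ω, X) => x (f ω)
      map_add' := fun f g => by simp
      map_smul' := fun c f => by simp }
    ‖x‖ (fun f => by
      calc ‖x (f ω)‖ ≤ ‖x‖ * ‖f ω‖ := x.le_opNorm _
        _ ≤ ‖x‖ * ‖f‖ :=
          mul_le_mul_of_nonneg_left (f.norm_coe_le_norm ω) (norm_nonneg x))

/-- `x*` in the dual unit ball is a *w\*-w point of continuity*: every net (filter) in the
dual unit ball converging weak\* to `x*` converges weakly to `x*`. -/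
def IsWStarWPC {E : Type*} [NormedAddCommGroup E] [NormedSpace ℝ E]
    (x : StrongDual ℝ E) : Prop :=
  ∀ l : Filter (StrongDual ℝ E), l.NeBot → (∀ᶠ φ in l, ‖φ‖ ≤ 1) →
    (∀ v : E, Tendsto (fun φ : StrongDual ℝ E => φ v) l (𝓝 (x v))) →
    ∀ Λ : StrongDual ℝ (StrongDual ℝ E), Tendsto (fun φ : StrongDual ℝ E => Λ φ) l (𝓝 (Λ x))

theorem deltaTensor_apply (ω : Ω) (x : StrongDual ℝ X) (f : C(Ω, X)) :
    deltaTensor ω x f = x (f ω) := rfl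

/-- **Supports of w\*-w PCs consist of isolated points.**  If `Λ` in the dual unit ball of
`C(Ω, X)` is a w\*-w point of continuity and
`Λ = ∑_{i} α_i (δ_{ω_i} ⊗ x_i*)` with `α_i ∈ (0, 1]`, `∑ α_i = 1`, `‖x_i*‖ = 1` and the
`ω_i` distinct, then every `ω_i` is an isolated point of `Ω`. -/
theorem isolated_of_isWStarWPC_sum [T2Space Ω] [CompleteSpace X]
    (Λ : StrongDual ℝ C(Ω, X)) (hΛball : ‖Λ‖ ≤ 1) (hpc : IsWStarWPC Λ)
    (α : ℕ → ℝ) (hα : ∀ i, α i ∈ Set.Ioc (0 : ℝ) 1) (hαsum : HasSum α 1)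
    (ω : ℕ → Ω) (hω : Function.Injective ω)
    (x : ℕ → StrongDual ℝ X) (hx : ∀ i, ‖x i‖ = 1)
    (hrep : ∀ f : C(Ω, X), Λ f = ∑' i, α i * (deltaTensor (ω i) (x i)) f) :
    ∀ i, IsOpen ({ω i} : Set Ω) := by
  intro i
  by_contra hiso
  haveI hne : (𝓝[≠] (ω i)).NeBot := by
    rw [neBot_iff]
    exact fun h => hiso ((isOpen_singleton_iff_punctured_nhds (ω i)).2 h)
  -- choose a norming vector v for x i
  obtain ⟨w, hw1, hw2⟩ := (x i).exists_lt_apply_of_lt_opNorm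
    (r := 1/2) (by rw [hx i]; norm_num)
  set v : X := if 0 ≤ x i w then w else -w with hvdef
  have hv1 : ‖v‖ ≤ 1 := by
    rw [hvdef]; split <;> simp [le_of_lt hw1, norm_neg]
  have hv2 : (1/2 : ℝ) < x i v := by
    rw [Real.norm_eq_abs] at hw2
    rw [hvdef]; split_ifs with h
    · rwa [abs_of_nonneg h] at hw2
    · rw [map_neg]; rw [abs_of_neg (lt_of_not_ge h)] at hw2; linarith
  -- index of shrinking neighborhoods of ω i
  set ι := {s : Set Ω // IsOpen s ∧ ω i ∈ s} with hιdef
  let F : Filter ι := comap Subtype.val (𝓝 (ω i)).smallSets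
  haveI hFne : F.NeBot := by
    refine comap_neBot fun t ht => ?_
    rcases ((𝓝 (ω i)).hasBasis_smallSets.mem_iff).1 ht with ⟨s, hs, hsub⟩
    exact ⟨⟨interior s, isOpen_interior, mem_interior_iff_mem_nhds.2 hs⟩,
      hsub interior_subset⟩
  let 𝒰 : Ultrafilter ι := Ultrafilter.of F
  have h𝒰F : (𝒰 : Filter ι) ≤ F := Ultrafilter.of_le F
  -- Urysohn bumps
  have hury : ∀ U : ι, ∃ g : C(Ω, ℝ), Set.EqOn g 0 U.1ᶜ ∧ g (ω i) = 1 ∧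
      ∀ z, g z ∈ Set.Icc (0:ℝ) 1 := by
    intro U
    obtain ⟨g, hg0, hg1, hg01⟩ := exists_continuous_zero_one_of_isClosed
      (isClosed_compl_iff.2 U.2.1) isClosed_singleton
      (Set.disjoint_singleton_right.2 fun h => h U.2.2)
    exact ⟨g, hg0, hg1 rfl, hg01⟩
  choose g hg0 hg1 hg01 using hury
  let fv : ι → C(Ω, X) := fun U => ⟨fun z => g U z • v, (g U).continuous.smul continuous_const⟩
  have hfvnorm : ∀ U, ‖fv U‖ ≤ ‖v‖ := by
    intro U
    refine (ContinuousMap.norm_le _ (norm_nonneg v)).2 fun z => ?_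
    have h01 := hg01 U z
    calc ‖g U z • v‖ = |g U z| * ‖v‖ := by rw [norm_smul, Real.norm_eq_abs]
      _ ≤ 1 * ‖v‖ := by
          apply mul_le_mul_of_nonneg_right _ (norm_nonneg v)
          rw [abs_of_nonneg h01.1]; exact h01.2
      _ = ‖v‖ := one_mul _
  -- the generalized limit functional Φ
  have hΦex : ∀ μ : StrongDual ℝ C(Ω, X), ∃ a : ℝ,
      Tendsto (fun U => μ (fv U)) 𝒰 (𝓝 a) := by
    intro μ
    have hmem : Set.Icc (-(‖μ‖ * ‖v‖)) (‖μ‖ * ‖v‖) ∈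
        Ultrafilter.map (fun U => μ (fv U)) 𝒰 := by
      refine Filter.mem_map.2 (Filter.univ_mem' fun U => ?_)
      have := μ.le_opNorm (fv U)
      have h2 : ‖μ (fv U)‖ ≤ ‖μ‖ * ‖v‖ := by
        calc ‖μ (fv U)‖ ≤ ‖μ‖ * ‖fv U‖ := μ.le_opNorm _
          _ ≤ ‖μ‖ * ‖v‖ := mul_le_mul_of_nonneg_left (hfvnorm U) (norm_nonneg μ)
      rw [Real.norm_eq_abs, abs_le] at h2
      exact ⟨h2.1, h2.2⟩
    obtain ⟨a, -, ha⟩ := isCompact_Icc.ultrafilter_le_nhds' _ hmem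
    rw [Ultrafilter.coe_map] at ha
    exact ⟨a, ha⟩
  choose Φ hΦ using hΦex
  have Φadd : ∀ μ ν, Φ (μ + ν) = Φ μ + Φ ν := by
    intro μ ν
    refine tendsto_nhds_unique (hΦ (μ + ν)) (((hΦ μ).add (hΦ ν)).congr fun U => ?_)
    simp
  have Φsmul : ∀ (c : ℝ) μ, Φ (c • μ) = c * Φ μ := by
    intro c μ
    refine tendsto_nhds_unique (hΦ (c • μ)) (((hΦ μ).const_mul c).congr fun U => ?_)
    simp
  have Φbound : ∀ μ, ‖Φ μ‖ ≤ ‖v‖ * ‖μ‖ := by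
    intro μ
    refine le_of_tendsto' (hΦ μ).norm fun U => ?_
    calc ‖μ (fv U)‖ ≤ ‖μ‖ * ‖fv U‖ := μ.le_opNorm _
      _ ≤ ‖μ‖ * ‖v‖ := mul_le_mul_of_nonneg_left (hfvnorm U) (norm_nonneg μ)
      _ = ‖v‖ * ‖μ‖ := mul_comm _ _
  let Ψ : StrongDual ℝ (StrongDual ℝ C(Ω, X)) := LinearMap.mkContinuous
    { toFun := Φ
      map_add' := Φadd
      map_smul' := fun c μ => by simpa using Φsmul c μ } ‖v‖ Φbound
  have hΨapply : ∀ μ, Ψ μ = Φ μ := fun μ => rfl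
  -- values of Φ on delta functionals
  have hΦdelta_i : ∀ y : StrongDual ℝ X, Φ (deltaTensor (ω i) y) = y v := by
    intro y
    refine tendsto_nhds_unique (hΦ _) (tendsto_const_nhds.congr fun U => ?_)
    show y v = deltaTensor (ω i) y (fv U)
    rw [deltaTensor_apply]
    show y v = y (g U (ω i) • v)
    rw [hg1 U, one_smul]
  have hΦdelta_ne : ∀ (z : Ω) (y : StrongDual ℝ X), z ≠ ω i → Φ (deltaTensor z y) = 0 := by
    intro z y hz
    have hmemF : {U : ι | U.1 ⊆ {z}ᶜ} ∈ F :=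
      preimage_mem_comap (((𝓝 (ω i)).hasBasis_smallSets.mem_iff).2
        ⟨{z}ᶜ, compl_singleton_mem_nhds hz.symm, fun s hs => hs⟩)
    have hev : ∀ᶠ U in (𝒰 : Filter ι), deltaTensor z y (fv U) = 0 := by
      filter_upwards [h𝒰F hmemF] with U hU
      have hzc : z ∈ U.1ᶜ := fun hzU => hU hzU rfl
      rw [deltaTensor_apply]
      show y (g U z • v) = 0
      have : g U z = 0 := hg0 U hzc
      rw [this, zero_smul, map_zero]
    exact tendsto_nhds_unique (hΦ _)
      (tendsto_const_nhds.congr' (hev.mono fun U h => h.symm))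
  -- the perturbed functionals
  let μt : Ω → StrongDual ℝ C(Ω, X) := fun t =>
    Λ + α i • (deltaTensor t (x i) - deltaTensor (ω i) (x i))
  have hexp : ∀ (t : Ω) (f : C(Ω, X)),
      μt t f = Λ f + α i * (x i (f t) - x i (f (ω i))) := by
    intro t f
    simp [μt, deltaTensor_apply, smul_eq_mul]
  -- norm bound
  have hμnorm : ∀ t : Ω, ‖μt t‖ ≤ 1 := by
    intro t
    refine ContinuousLinearMap.opNorm_le_bound _ zero_le_one fun f => ?_
    set G : ℕ → ℝ := fun j => α j * x j (f (ω j)) with hGdef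
    set F' : ℕ → ℝ := fun j => α j * x j (f (if j = i then t else ω j)) with hFdef
    have hb : ∀ (z : Ω) (j : ℕ), |α j * x j (f z)| ≤ α j * ‖f‖ := by
      intro z j
      rw [abs_mul, abs_of_pos (hα j).1]
      refine mul_le_mul_of_nonneg_left ?_ (le_of_lt (hα j).1)
      calc |x j (f z)| = ‖x j (f z)‖ := (Real.norm_eq_abs _).symm
        _ ≤ ‖x j‖ * ‖f z‖ := (x j).le_opNorm _
        _ = ‖f z‖ := by rw [hx j, one_mul]
        _ ≤ ‖f‖ := f.norm_coe_le_norm z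
    have hgsum : Summable (fun j => α j * ‖f‖) := hαsum.summable.mul_right _
    have hGs : Summable G :=
      Summable.of_norm_bounded hgsum fun j => by
        rw [Real.norm_eq_abs]; exact hb _ j
    have hFs : Summable F' :=
      Summable.of_norm_bounded hgsum fun j => by
        rw [Real.norm_eq_abs]; exact hb _ j
    have h3 : Λ f = ∑' j, G j := hrep f
    have h2 : (∑' j, F' j) - ∑' j, G j = F' i - G i := by
      rw [← Summable.tsum_sub hFs hGs]
      exact tsum_eq_single i fun j hj => by simp [hFdef, hGdef, if_neg hj]
    have hμf : μt t f = ∑' j, F' j := by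
      rw [hexp t f, h3]
      have hFi : F' i = α i * x i (f t) := by simp [hFdef]
      have hGi : G i = α i * x i (f (ω i)) := rfl
      rw [mul_sub]
      linarith [h2, hFi, hGi]
    rw [hμf, one_mul]
    calc ‖∑' j, F' j‖ ≤ ∑' j, ‖F' j‖ :=
          norm_tsum_le_tsum_norm (by simpa [Real.norm_eq_abs] using hFs.abs)
      _ ≤ ∑' j, α j * ‖f‖ := by
          refine Summable.tsum_le_tsum (fun j => ?_) (by simpa [Real.norm_eq_abs] using hFs.abs) hgsum
          rw [Real.norm_eq_abs]; exact hb _ j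
      _ = (∑' j, α j) * ‖f‖ := tsum_mul_right
      _ = 1 * ‖f‖ := by rw [hαsum.tsum_eq]
      _ = ‖f‖ := one_mul _
  -- the filter and weak* convergence
  set l : Filter (StrongDual ℝ C(Ω, X)) := Filter.map μt (𝓝[≠] (ω i)) with hldef
  have hlne : l.NeBot := hne.map _
  have hball : ∀ᶠ φ in l, ‖φ‖ ≤ 1 :=
    eventually_map.2 (Eventually.of_forall fun t => hμnorm t)
  have hwstar : ∀ f : C(Ω, X), Tendsto (fun φ : StrongDual ℝ C(Ω, X) => φ f) l (𝓝 (Λ f)) := by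
    intro f
    rw [hldef, tendsto_map'_iff]
    have hc : Tendsto (fun t => Λ f + α i * (x i (f t) - x i (f (ω i))))
        (𝓝[≠] (ω i)) (𝓝 (Λ f + α i * (x i (f (ω i)) - x i (f (ω i))))) := by
      refine Tendsto.const_add _ (Tendsto.const_mul _ (Tendsto.sub_const ?_ _))
      exact (((x i).continuous.comp f.continuous).tendsto (ω i)).mono_left nhdsWithin_le_nhds
    simp only [sub_self, mul_zero, add_zero] at hc
    exact hc.congr fun t => (hexp t f).symm
  have hmain := hpc l hlne hball hwstar Ψ
  rw [hldef, tendsto_map'_iff] at hmain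
  have hconst : ∀ᶠ t in 𝓝[≠] (ω i), Ψ (μt t) = Ψ Λ - α i * x i v := by
    filter_upwards [self_mem_nhdsWithin] with t ht
    have h4 : Ψ (μt t) = Ψ Λ + α i * (Φ (deltaTensor t (x i)) - Φ (deltaTensor (ω i) (x i))) := by
      rw [show μt t = Λ + α i • (deltaTensor t (x i) - deltaTensor (ω i) (x i)) from rfl,
        map_add, map_smul, map_sub, smul_eq_mul, hΨapply, hΨapply, hΨapply]
    rw [hΦdelta_ne t (x i) ht, hΦdelta_i (x i)] at h4
    rw [h4]; ring
  have hfinal : Ψ Λ = Ψ Λ - α i * x i v :=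
    tendsto_nhds_unique hmain (tendsto_const_nhds.congr' (hconst.mono fun t h => h.symm))
  have hpos : 0 < α i * x i v := mul_pos (hα i).1 (lt_trans (by norm_num) hv2)
  linarith
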